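/- For a symmetric positive semidefinite matrix L ∈ ℝ^{N×N} (a graph Laplacian of a connected graph) with eigenvalues 0 = λ₁ < λ₂ ≤ ... ≤ λ_max, the choice α* = 2/(λ₂ + λ_max) minimizes, over α ∈ ℝ, the spectral norm ‖I_N − αL − (1/N)𝟙𝟙ᵀ‖₂, and the minimal value equals (λ_max − λ₂)/(λ_max + λ₂), which is strictly less than 1. -/

import Mathlib

open Matrix

private lemma symm_dot {N : ℕ} (L : Matrix (Fin N) (Fin N) ℝ) (hsym : L.IsSymm)
    (x y : Fin N → ℝ) : (L *ᵥ x) ⬝ᵥ y = x ⬝ᵥ (L *ᵥ y) := by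
  rw [dotProduct_comm, dotProduct_mulVec, ← mulVec_transpose, hsym.eq]
  exact dotProduct_comm _ _

private lemma dot_self_nonneg' {N : ℕ} (v : Fin N → ℝ) : 0 ≤ v ⬝ᵥ v :=
  Finset.sum_nonneg fun i _ => mul_self_nonneg (v i)

private lemma norm_sq_eq_dot' {N : ℕ} (v : Fin N → ℝ) :
    ‖(WithLp.equiv 2 (Fin N → ℝ)).symm v‖ ^ 2 = v ⬝ᵥ v := by
  rw [← real_inner_self_eq_norm_sq]
  simp [EuclideanSpace.norm_sq_eq, dotProduct, ← sq]

private lemma pinch {N : ℕ} (L : Matrix (Fin N) (Fin N) ℝ) (hsym : L.IsSymm)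
    (hL1 : L *ᵥ (fun _ => (1 : ℝ)) = 0)
    (a b : ℝ) (hab : a ≤ b)
    (hquad : ∀ v : Fin N → ℝ, v ⬝ᵥ (fun _ => (1 : ℝ)) = 0 →
      a * (v ⬝ᵥ v) ≤ v ⬝ᵥ (L *ᵥ v) ∧ v ⬝ᵥ (L *ᵥ v) ≤ b * (v ⬝ᵥ v))
    (w : Fin N → ℝ) (hw : w ⬝ᵥ (fun _ => (1 : ℝ)) = 0) :
    (L *ᵥ w - ((a + b)/2) • w) ⬝ᵥ (L *ᵥ w - ((a + b)/2) • w)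
      ≤ ((b - a)/2)^2 * (w ⬝ᵥ w) := by
  set one : Fin N → ℝ := fun _ => (1 : ℝ) with hone
  have horth : ∀ u : Fin N → ℝ, (L *ᵥ u) ⬝ᵥ one = 0 := fun u => by
    rw [symm_dot L hsym, hL1, dotProduct_zero]
  set B : (Fin N → ℝ) → (Fin N → ℝ) := fun u => L *ᵥ u - a • u with hB
  have hBorth : ∀ u : Fin N → ℝ, u ⬝ᵥ one = 0 → (B u) ⬝ᵥ one = 0 := fun u hu => by
    simp [hB, sub_dotProduct, smul_dotProduct, horth, hu]
  have hBsymm : ∀ x y : Fin N → ℝ, (B x) ⬝ᵥ y = x ⬝ᵥ (B y) := fun x y => by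
    simp only [hB, sub_dotProduct, dotProduct_sub, smul_dotProduct, dotProduct_smul,
      symm_dot L hsym]
  have hBdot : ∀ u : Fin N → ℝ, (B u) ⬝ᵥ u = u ⬝ᵥ (L *ᵥ u) - a * (u ⬝ᵥ u) := fun u => by
    simp only [hB, sub_dotProduct, smul_dotProduct, smul_eq_mul]
    rw [dotProduct_comm (L *ᵥ u) u]
  have hBpos : ∀ u : Fin N → ℝ, u ⬝ᵥ one = 0 → 0 ≤ (B u) ⬝ᵥ u := fun u hu => by
    have := (hquad u hu).1; rw [hBdot]; linarith
  have hBub : ∀ u : Fin N → ℝ, u ⬝ᵥ one = 0 → (B u) ⬝ᵥ u ≤ (b - a) * (u ⬝ᵥ u) :=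
    fun u hu => by
    have := (hquad u hu).2; rw [hBdot]; linarith
  set s : ℝ := (B w) ⬝ᵥ (B w) with hs
  have hsnn : 0 ≤ s := dot_self_nonneg' _
  have hBworth : (B w) ⬝ᵥ one = 0 := hBorth w hw
  -- Cauchy–Schwarz via discriminant
  have hCS : s ^ 2 ≤ ((B (B w)) ⬝ᵥ (B w)) * ((B w) ⬝ᵥ w) := by
    have hkey : ∀ t : ℝ, 0 ≤ ((B (B w)) ⬝ᵥ (B w)) * (t * t) + (2 * s) * t
        + (B w) ⬝ᵥ w := by
      intro t
      have hmem : (w + t • B w) ⬝ᵥ one = 0 := by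
        simp [add_dotProduct, smul_dotProduct, hw, hBworth]
      have h0 : 0 ≤ (B (w + t • B w)) ⬝ᵥ (w + t • B w) := hBpos _ hmem
      have hBadd : B (w + t • B w) = B w + t • B (B w) := by
        simp only [hB, mulVec_add, mulVec_smul, smul_add, smul_smul]
        module
      rw [hBadd] at h0
      have h1 : (B (B w)) ⬝ᵥ w = s := by rw [hBsymm]
      simp only [add_dotProduct, dotProduct_add, smul_dotProduct, dotProduct_smul,
        smul_eq_mul, dotProduct_comm w (B w)] at h0
      rw [h1, ← hs] at h0
      nlinarith [h0]
    have hd := discrim_le_zero hkey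
    rw [discrim] at hd
    nlinarith [hd]
  have hBBub : (B (B w)) ⬝ᵥ (B w) ≤ (b - a) * s := hBub _ hBworth
  have hBwnn : 0 ≤ (B w) ⬝ᵥ w := hBpos w hw
  have hsle : s ≤ (b - a) * ((B w) ⬝ᵥ w) := by
    rcases eq_or_lt_of_le hsnn with h | h
    · rw [← h]
      nlinarith [hBwnn]
    · have := hCS
      have h2 : s ^ 2 ≤ (b - a) * s * ((B w) ⬝ᵥ w) :=
        le_trans hCS (by nlinarith [hBwnn, hBBub])
      nlinarith [h2, h]
  -- final
  have hd : L *ᵥ w - ((a + b)/2) • w = B w - ((b - a)/2) • w := by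
    simp only [hB]; module
  rw [hd]
  have hexp : (B w - ((b - a)/2) • w) ⬝ᵥ (B w - ((b - a)/2) • w)
      = s - (b - a) * ((B w) ⬝ᵥ w) + ((b - a)/2)^2 * (w ⬝ᵥ w) := by
    simp only [sub_dotProduct, dotProduct_sub, smul_dotProduct, dotProduct_smul,
      smul_eq_mul]
    rw [dotProduct_comm w (B w)]
    ring
  rw [hexp]
  linarith

set_option maxHeartbeats 1000000 in
set_option synthInstance.maxHeartbeats 400000 in
theorem stmt0 (N : ℕ) (hN : 0 < N) (L : Matrix (Fin N) (Fin N) ℝ)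
    (hsym : L.IsSymm) (hL1 : L *ᵥ (fun _ => (1 : ℝ)) = 0)
    (lam2 lamMax : ℝ) (hlam2 : 0 < lam2) (hle : lam2 ≤ lamMax)
    (hquad : ∀ v : Fin N → ℝ, v ⬝ᵥ (fun _ => (1 : ℝ)) = 0 →
      lam2 * (v ⬝ᵥ v) ≤ v ⬝ᵥ (L *ᵥ v) ∧ v ⬝ᵥ (L *ᵥ v) ≤ lamMax * (v ⬝ᵥ v))
    (hev2 : ∃ v : Fin N → ℝ, v ≠ 0 ∧ v ⬝ᵥ (fun _ => (1 : ℝ)) = 0 ∧ L *ᵥ v = lam2 • v)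
    (hevmax : ∃ v : Fin N → ℝ, v ≠ 0 ∧ v ⬝ᵥ (fun _ => (1 : ℝ)) = 0 ∧ L *ᵥ v = lamMax • v) :
    let P : Matrix (Fin N) (Fin N) ℝ := (N : ℝ)⁻¹ • Matrix.of (fun _ _ => (1 : ℝ))
    let f : ℝ → ℝ := fun α => ‖Matrix.toEuclideanCLM (𝕜 := ℝ) ((1 : Matrix (Fin N) (Fin N) ℝ) - α • L - P)‖
    f (2 / (lam2 + lamMax)) = (lamMax - lam2) / (lamMax + lam2)
      ∧ (∀ α : ℝ, f (2 / (lam2 + lamMax)) ≤ f α)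
      ∧ (lamMax - lam2) / (lamMax + lam2) < 1 := by
  intro P f
  set one : Fin N → ℝ := fun _ => (1 : ℝ) with hone
  have hsum : 0 < lam2 + lamMax := by linarith
  have hsumne : lam2 + lamMax ≠ 0 := ne_of_gt hsum
  have hsumne' : lamMax + lam2 ≠ 0 := by intro h; exact hsumne (by linarith)
  set astar : ℝ := 2 / (lam2 + lamMax) with hastar
  set c : ℝ := (lamMax - lam2) / (lamMax + lam2) with hc
  have hcnn : 0 ≤ c := div_nonneg (by linarith) (by linarith)
  have hclt1 : c < 1 := by
    rw [hc, div_lt_one (by linarith)]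
    linarith
  have honedot : one ⬝ᵥ one = (N : ℝ) := by simp [hone, dotProduct]
  have hNne : (N : ℝ) ≠ 0 := Nat.cast_ne_zero.mpr hN.ne'
  -- action of P
  have hPmul : ∀ v : Fin N → ℝ, P *ᵥ v = ((N : ℝ)⁻¹ * (v ⬝ᵥ one)) • one := by
    intro v
    rw [show P = (N : ℝ)⁻¹ • Matrix.of (fun _ _ => (1 : ℝ)) from rfl, smul_mulVec]
    funext i
    simp [Matrix.mulVec, dotProduct, hone, mul_comm]
  -- mulVec of the matrix in question
  have hM : ∀ (α : ℝ) (v : Fin N → ℝ),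
      ((1 : Matrix (Fin N) (Fin N) ℝ) - α • L - P) *ᵥ v
        = v - α • (L *ᵥ v) - ((N : ℝ)⁻¹ * (v ⬝ᵥ one)) • one := by
    intro α v
    rw [sub_mulVec, sub_mulVec, one_mulVec, smul_mulVec, hPmul]
  -- lower bound from an eigenvector
  have hlb : ∀ (α lam : ℝ),
      (∃ v : Fin N → ℝ, v ≠ 0 ∧ v ⬝ᵥ one = 0 ∧ L *ᵥ v = lam • v) →
      |1 - α * lam| ≤ f α := by
    intro α lam ⟨v, hv0, hvone, hvev⟩
    have hMv : ((1 : Matrix (Fin N) (Fin N) ℝ) - α • L - P) *ᵥ v = (1 - α * lam) • v := by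
      rw [hM, hvev, hvone]
      simp [smul_smul]
      module
    set x : EuclideanSpace ℝ (Fin N) := (WithLp.equiv 2 (Fin N → ℝ)).symm v with hx
    have hTx : (Matrix.toEuclideanCLM (𝕜 := ℝ)
        ((1 : Matrix (Fin N) (Fin N) ℝ) - α • L - P)) x = (1 - α * lam) • x := by
      rw [hx, Matrix.toEuclideanCLM_toLp]
      show WithLp.toLp 2 (_ *ᵥ v) = _
      rw [hMv]
      simp
    have hxnorm : 0 < ‖x‖ := by
      rw [norm_pos_iff]
      intro h
      apply hv0
      have h2 : v = WithLp.equiv 2 (Fin N → ℝ) ((WithLp.equiv 2 (Fin N → ℝ)).symm v) := by simp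
      rw [h2, ← hx, h]
      rfl
    have h1 := (Matrix.toEuclideanCLM (𝕜 := ℝ)
        ((1 : Matrix (Fin N) (Fin N) ℝ) - α • L - P)).le_opNorm x
    rw [hTx, norm_smul] at h1
    have h2 : ‖(1 - α * lam : ℝ)‖ ≤ f α :=
      le_of_mul_le_mul_right (by exact h1) hxnorm
    rw [Real.norm_eq_abs] at h2
    exact h2
  -- upper bound at astar
  have hub : f astar ≤ c := by
    apply ContinuousLinearMap.opNorm_le_bound _ hcnn
    intro x
    set v : Fin N → ℝ := WithLp.equiv 2 (Fin N → ℝ) x with hv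
    have hxv : x = (WithLp.equiv 2 (Fin N → ℝ)).symm v := by simp [hv]
    set sbar : ℝ := (N : ℝ)⁻¹ * (v ⬝ᵥ one) with hsbar
    set w : Fin N → ℝ := v - sbar • one with hwdef
    have hwone : w ⬝ᵥ one = 0 := by
      rw [hwdef, sub_dotProduct, smul_dotProduct, honedot, hsbar, smul_eq_mul]
      field_simp
      ring
    have hLv : L *ᵥ v = L *ᵥ w := by
      rw [hwdef, mulVec_sub, mulVec_smul, hL1]
      simp
    have hMv : ((1 : Matrix (Fin N) (Fin N) ℝ) - astar • L - P) *ᵥ v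
        = (-astar) • (L *ᵥ w - ((lam2 + lamMax)/2) • w) := by
      have hmul : (-astar) * ((lam2 + lamMax)/2) = -1 := by
        rw [hastar]; field_simp
      have h2 : (-astar) • (L *ᵥ w - ((lam2 + lamMax)/2) • w)
          = w - astar • (L *ᵥ w) := by
        rw [smul_sub, smul_smul, hmul]
        module
      rw [hM, hLv, h2, hwdef, hsbar]
      abel
    have hpinch := pinch L hsym hL1 lam2 lamMax hle hquad w hwone
    have hwle : w ⬝ᵥ w ≤ v ⬝ᵥ v := by
      have hexp : v ⬝ᵥ v = w ⬝ᵥ w + 2 * sbar * (w ⬝ᵥ one) + sbar^2 * (one ⬝ᵥ one) := by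
        have : v = w + sbar • one := by rw [hwdef]; module
        rw [this]
        simp only [add_dotProduct, dotProduct_add, smul_dotProduct, dotProduct_smul,
          smul_eq_mul]
        rw [dotProduct_comm one w]
        ring
      rw [hexp, hwone, honedot]
      nlinarith [sq_nonneg sbar, (Nat.cast_pos (α := ℝ)).mpr hN]
    -- norms
    have hTx : (Matrix.toEuclideanCLM (𝕜 := ℝ)
        ((1 : Matrix (Fin N) (Fin N) ℝ) - astar • L - P)) x
        = (WithLp.equiv 2 (Fin N → ℝ)).symm
            ((-astar) • (L *ᵥ w - ((lam2 + lamMax)/2) • w)) := by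
      rw [hxv, Matrix.toEuclideanCLM_toLp]
      exact congrArg (WithLp.toLp 2) hMv
    have hsq : ‖(Matrix.toEuclideanCLM (𝕜 := ℝ)
        ((1 : Matrix (Fin N) (Fin N) ℝ) - astar • L - P)) x‖^2 ≤ (c * ‖x‖)^2 := by
      rw [hTx, norm_sq_eq_dot']
      have hxnormsq : ‖x‖^2 = v ⬝ᵥ v := by rw [hxv, norm_sq_eq_dot']
      have hrhs : (c * ‖x‖)^2 = c^2 * (v ⬝ᵥ v) := by
        rw [mul_pow, hxnormsq]
      rw [hrhs]
      have hca : (-astar) * (-astar) * ((lamMax - lam2)/2)^2 = c^2 := by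
        rw [hastar, hc]
        field_simp
        ring
      calc ((-astar) • (L *ᵥ w - ((lam2 + lamMax)/2) • w)) ⬝ᵥ
              ((-astar) • (L *ᵥ w - ((lam2 + lamMax)/2) • w))
          = (-astar) * (-astar) * ((L *ᵥ w - ((lam2 + lamMax)/2) • w) ⬝ᵥ
              (L *ᵥ w - ((lam2 + lamMax)/2) • w)) := by
            simp only [smul_dotProduct, dotProduct_smul, smul_eq_mul]; ring
        _ ≤ (-astar) * (-astar) * (((lamMax - lam2)/2)^2 * (w ⬝ᵥ w)) := by
            apply mul_le_mul_of_nonneg_left hpinch (mul_self_nonneg _)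
        _ = ((-astar) * (-astar) * ((lamMax - lam2)/2)^2) * (w ⬝ᵥ w) := by ring
        _ ≤ ((-astar) * (-astar) * ((lamMax - lam2)/2)^2) * (v ⬝ᵥ v) := by
            exact mul_le_mul_of_nonneg_left hwle
              (mul_nonneg (mul_self_nonneg _) (sq_nonneg _))
        _ = c^2 * (v ⬝ᵥ v) := by rw [hca]
    have h1 : (0:ℝ) ≤ ‖(Matrix.toEuclideanCLM (𝕜 := ℝ)
        ((1 : Matrix (Fin N) (Fin N) ℝ) - astar • L - P)) x‖ := norm_nonneg _
    have h2 : (0:ℝ) ≤ c * ‖x‖ := mul_nonneg hcnn (norm_nonneg _)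
    exact (pow_le_pow_iff_left₀ h1 h2 (by norm_num)).mp hsq
  -- lower bound at any α
  have hglb : ∀ α : ℝ, c ≤ f α := by
    intro α
    rcases le_or_gt α astar with h | h
    · have h2 : c ≤ |1 - α * lam2| := by
        have : c = 1 - astar * lam2 := by
          rw [hastar, hc]
          field_simp
          ring
        have h3 : 1 - astar * lam2 ≤ 1 - α * lam2 := by nlinarith
        calc c = 1 - astar * lam2 := this
          _ ≤ 1 - α * lam2 := h3
          _ ≤ |1 - α * lam2| := le_abs_self _
      exact le_trans h2 (hlb α lam2 hev2)
    · have h2 : c ≤ |1 - α * lamMax| := by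
        have hcm : c = astar * lamMax - 1 := by
          rw [hastar, hc]
          field_simp
          ring
        have hmaxpos : 0 < lamMax := lt_of_lt_of_le hlam2 hle
        have h3 : astar * lamMax - 1 ≤ α * lamMax - 1 := by nlinarith
        calc c = astar * lamMax - 1 := hcm
          _ ≤ α * lamMax - 1 := h3
          _ = -(1 - α * lamMax) := by ring
          _ ≤ |1 - α * lamMax| := neg_le_abs _
      exact le_trans h2 (hlb α lamMax hevmax)
  have heq : f astar = c := le_antisymm hub (hglb astar)
  exact ⟨heq, fun α => heq ▸ hglb α, hclt1⟩
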